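/- The linear span of the set of radial compactly supported functions $\mathcal{A} = \{ z \mapsto g(|z - c|) : g\in C_c(\mathbb{R}),\ c\in\mathbb{C} \}$ is dense in $C_c(\mathbb{C})$ with respect to uniform convergence. -/

import Mathlib

open MeasureTheory Filter Matrix

noncomputable def singVals {n : ℕ} (A : Matrix (Fin n) (Fin n) ℂ) : Fin n → ℝ :=
  fun i => Real.sqrt ((Matrix.isHermitian_conjTranspose_mul_self A).eigenvalues i)

/-- `A ∼_σ k` on the domain `Dset`: singular value distribution. -/
def SingSymb {α : Type*} [MeasureSpace α] (Dset : Set α)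
    (A : ∀ n : ℕ, Matrix (Fin n) (Fin n) ℂ) (k : α → ℂ) : Prop :=
  ∀ F : C(ℝ, ℂ), HasCompactSupport F →
    Tendsto (fun n : ℕ => (n : ℂ)⁻¹ * ∑ i, F (singVals (A n) i)) atTop
      (nhds (((volume Dset).toReal)⁻¹ • ∫ x in Dset, F (‖k x‖)))

/-- `A ∼_λ k` on the domain `Dset`: eigenvalue (Weyl) distribution, where the
eigenvalues of `A n` (with multiplicity) are the roots of its characteristic polynomial. -/
def SpecSymb {α : Type*} [MeasureSpace α] (Dset : Set α)
    (A : ∀ n : ℕ, Matrix (Fin n) (Fin n) ℂ) (k : α → ℂ) : Prop :=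
  ∀ F : C(ℂ, ℂ), HasCompactSupport F →
    Tendsto (fun n : ℕ =>
        (n : ℂ)⁻¹ * (Multiset.map (fun z => F z) (A n).charpoly.roots).sum) atTop
      (nhds (((volume Dset).toReal)⁻¹ • ∫ x in Dset, F (k x)))

/-- Zero-distributed sequence: `A ∼_σ 0`. -/
def ZeroDist (A : ∀ n : ℕ, Matrix (Fin n) (Fin n) ℂ) : Prop :=
  ∀ F : C(ℝ, ℂ), HasCompactSupport F →
    Tendsto (fun n : ℕ => (n : ℂ)⁻¹ * ∑ i, F (singVals (A n) i)) atTop (nhds (F 0))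

open scoped BoundedContinuousFunction

/-- Linear combinations of radial compactly supported functions
`z ↦ g(|z - c|)` are dense in `C_c(ℂ)` for the uniform norm. -/
theorem radial_span_dense (F : C(ℂ, ℂ)) (hF : HasCompactSupport F)
    (ε : ℝ) (hε : 0 < ε) :
    ∃ (N : ℕ) (coef : Fin N → ℂ) (c : Fin N → ℂ) (g : Fin N → C(ℝ, ℂ)),
      (∀ i, HasCompactSupport (g i)) ∧
      ∀ z : ℂ, ‖F z - ∑ i, coef i * g i (‖z - c i‖)‖ ≤ ε := by
  classical
  have hFuc : UniformContinuous F :=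
    F.continuous.uniformContinuous_of_tendsto_cocompact hF.is_zero_at_infty
  obtain ⟨δ₀, hδ₀, hδ⟩ := Metric.uniformContinuous_iff.1 hFuc (ε/2) (by positivity)
  set δ : ℝ := δ₀ / 2 with hδdef
  have hδpos : 0 < δ := by positivity
  -- the radial profile
  set φ : ℂ → ℝ := fun z => max 0 (δ - ‖z‖) with hφdef
  have hφcont : Continuous φ := continuous_const.max (continuous_const.sub continuous_norm)
  have hφnonneg : ∀ z, 0 ≤ φ z := fun z => le_max_left _ _
  have hφle : ∀ z, φ z ≤ δ := fun z => max_le hδpos.le (by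
    have := norm_nonneg z; simp only [sub_le_self_iff]; exact this)
  have hφeq_zero : ∀ z : ℂ, δ ≤ ‖z‖ → φ z = 0 := by
    intro z hz
    simp only [hφdef, max_eq_left_iff]
    linarith
  have hφpos : ∀ z : ℂ, ‖z‖ < δ → 0 < φ z := by
    intro z hz
    simp only [hφdef, lt_max_iff]
    right; linarith
  have hφsupp : HasCompactSupport φ := by
    apply HasCompactSupport.intro (isCompact_closedBall (0:ℂ) δ)
    intro z hz
    apply hφeq_zero
    simp only [Metric.mem_closedBall, not_le, Complex.dist_eq, sub_zero] at hz
    exact hz.le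
  have hφint : Integrable φ := hφcont.integrable_of_hasCompactSupport hφsupp
  set K : ℝ := ∫ z : ℂ, φ z with hKdef
  have hK : 0 < K := by
    rw [hKdef, MeasureTheory.integral_pos_iff_support_of_nonneg_ae
      (Filter.Eventually.of_forall hφnonneg) hφint]
    have hsub : Metric.ball (0:ℂ) δ ⊆ Function.support φ := by
      intro z hz
      simp only [Metric.mem_ball, Complex.dist_eq, sub_zero] at hz
      exact (hφpos z hz).ne'
    calc (0:ENNReal) < volume (Metric.ball (0:ℂ) δ) := Metric.measure_ball_pos volume 0 hδpos
      _ ≤ volume (Function.support φ) := measure_mono hsub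
  -- the bounded continuous radial bumps
  have hbound : ∀ c z : ℂ, ‖((φ (z - c) : ℝ) : ℂ)‖ ≤ δ := by
    intro c z
    rw [Complex.norm_real, Real.norm_eq_abs, abs_of_nonneg (hφnonneg _)]
    exact hφle _
  set ψ : ℂ → (ℂ →ᵇ ℂ) := fun c =>
    BoundedContinuousFunction.ofNormedAddCommGroup (fun z => ((φ (z - c) : ℝ) : ℂ))
      (Complex.continuous_ofReal.comp (hφcont.comp (continuous_id.sub continuous_const)))
      δ (hbound c) with hψdef
  have hψapply : ∀ c z : ℂ, ψ c z = ((φ (z - c) : ℝ) : ℂ) := fun c z => rfl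
  have hψlip : LipschitzWith 1 ψ := by
    apply LipschitzWith.of_dist_le_mul
    intro a b
    rw [NNReal.coe_one, one_mul]
    apply (BoundedContinuousFunction.dist_le dist_nonneg).2
    intro z
    rw [hψapply a z, hψapply b z, Complex.dist_eq, ← Complex.ofReal_sub, Complex.norm_real]
    have h1 : |φ (z - a) - φ (z - b)| ≤ |‖z - a‖ - ‖z - b‖| := by
      have h := abs_max_sub_max_le_abs (δ - ‖z - a‖) (δ - ‖z - b‖) 0
      simp only [hφdef]
      rw [max_comm 0 (δ - ‖z - a‖), max_comm 0 (δ - ‖z - b‖)]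
      calc |(δ - ‖z - a‖) ⊔ 0 - (δ - ‖z - b‖) ⊔ 0|
          ≤ |(δ - ‖z - a‖) - (δ - ‖z - b‖)| := h
        _ = |‖z - a‖ - ‖z - b‖| := by rw [abs_sub_comm]; ring_nf
    have h2 : |‖z - a‖ - ‖z - b‖| ≤ ‖a - b‖ := by
      have := abs_norm_sub_norm_le (z - a) (z - b)
      calc |‖z - a‖ - ‖z - b‖|
          ≤ ‖(z - a) - (z - b)‖ := this
        _ = ‖a - b‖ := by rw [show (z - a) - (z - b) = -(a - b) by ring, norm_neg]
    calc |φ (z - a) - φ (z - b)| ≤ ‖a - b‖ := h1.trans h2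
      _ = dist a b := (Complex.dist_eq a b).symm
  set Φ : ℂ → (ℂ →ᵇ ℂ) := fun c => F c • ψ c with hΦdef
  have hΦapply : ∀ c z : ℂ, Φ c z = F c * ((φ (z - c) : ℝ) : ℂ) := fun c z => rfl
  have hΦcont : Continuous Φ := F.continuous.smul hψlip.continuous
  have hΦsupp : HasCompactSupport Φ := by
    apply hF.mono
    intro c hc
    simp only [Function.mem_support] at hc ⊢
    intro hFc
    exact hc (by simp only [hΦdef, hFc, zero_smul])
  have hΦint : Integrable Φ := hΦcont.integrable_of_hasCompactSupport hΦsupp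
  set IF : ℂ →ᵇ ℂ := ∫ c : ℂ, Φ c with hIFdef
  have hIFapply : ∀ z : ℂ, IF z = ∫ c : ℂ, Φ c z := by
    intro z
    exact ((BoundedContinuousFunction.evalCLM ℂ z).integral_comp_comm hΦint).symm
  -- integrability of translated bump
  have htransint : ∀ z : ℂ, Integrable (fun c : ℂ => φ (z - c)) := by
    intro z
    apply (hφcont.comp (continuous_const.sub continuous_id)).integrable_of_hasCompactSupport
    apply HasCompactSupport.intro (isCompact_closedBall z δ)
    intro c hc
    apply hφeq_zero
    simp only [Metric.mem_closedBall, not_le, Complex.dist_eq] at hc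
    show δ ≤ ‖z - c‖
    rw [← norm_neg, neg_sub]
    exact hc.le
  have htrans : ∀ z : ℂ, ∫ c : ℂ, φ (z - c) = K :=
    fun z => MeasureTheory.integral_sub_left_eq_self φ volume z
  -- mollification estimate
  have hmoll : ∀ z : ℂ, ‖(K : ℂ) * F z - IF z‖ ≤ ε/2 * K := by
    intro z
    have hint1 : Integrable (fun c : ℂ => ((φ (z - c) : ℝ) : ℂ) * F z) :=
      ((htransint z).ofReal (𝕜 := ℂ)).mul_const (F z)
    have hint2 : Integrable (fun c : ℂ => Φ c z) :=
      (BoundedContinuousFunction.evalCLM ℂ z).integrable_comp hΦint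
    have hKz : (K : ℂ) * F z = ∫ c : ℂ, ((φ (z - c) : ℝ) : ℂ) * F z := by
      have hoR : (∫ c : ℂ, ((φ (z - c) : ℝ) : ℂ)) = ((∫ c : ℂ, φ (z - c) : ℝ) : ℂ) :=
        integral_ofReal
      rw [MeasureTheory.integral_mul_const, hoR, htrans z, mul_comm]
    have hdiff : (K : ℂ) * F z - IF z
        = ∫ c : ℂ, (((φ (z - c) : ℝ) : ℂ) * F z - Φ c z) := by
      rw [MeasureTheory.integral_sub hint1 hint2, ← hKz, ← hIFapply]
    rw [hdiff]
    have hb : ∀ c : ℂ, ‖((φ (z - c) : ℝ) : ℂ) * F z - Φ c z‖ ≤ ε/2 * φ (z - c) := by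
      intro c
      rw [hΦapply]
      have heq : ((φ (z - c) : ℝ) : ℂ) * F z - F c * ((φ (z - c) : ℝ) : ℂ)
          = (F z - F c) * ((φ (z - c) : ℝ) : ℂ) := by ring
      rw [heq, norm_mul, Complex.norm_real, Real.norm_eq_abs, abs_of_nonneg (hφnonneg _)]
      rcases le_or_gt δ (‖z - c‖) with h | h
      · rw [hφeq_zero _ h]; simp
      · have hdist : dist z c < δ₀ := by
          rw [Complex.dist_eq]
          calc ‖z - c‖ < δ := h
            _ < δ₀ := by rw [hδdef]; linarith
        have hFF : ‖F z - F c‖ ≤ ε/2 := by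
          have := hδ hdist
          rw [dist_eq_norm] at this
          exact this.le
        exact mul_le_mul_of_nonneg_right hFF (hφnonneg _)
    calc ‖∫ c : ℂ, (((φ (z - c) : ℝ) : ℂ) * F z - Φ c z)‖
        ≤ ∫ c : ℂ, ε/2 * φ (z - c) :=
          MeasureTheory.norm_integral_le_of_norm_le ((htransint z).const_mul _)
            (Filter.Eventually.of_forall hb)
      _ = ε/2 * K := by rw [MeasureTheory.integral_const_mul, htrans z]
  -- simple function approximation of the Bochner integral
  letI : MeasurableSpace (ℂ →ᵇ ℂ) := borel _
  haveI : BorelSpace (ℂ →ᵇ ℂ) := ⟨rfl⟩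
  haveI : TopologicalSpace.SeparableSpace (Set.range Φ) :=
    (TopologicalSpace.isSeparable_range hΦcont).separableSpace
  have hΦmeas : Measurable Φ := hΦcont.measurable
  obtain ⟨c₀, hc₀⟩ : ∃ c₀ : ℂ, c₀ ∉ tsupport F := by
    by_contra h
    push_neg at h
    exact hF.ne_univ (Set.eq_univ_of_forall h)
  have hFc₀ : F c₀ = 0 := image_eq_zero_of_notMem_tsupport hc₀
  have h0mem : (0 : ℂ →ᵇ ℂ) ∈ Set.range Φ :=
    ⟨c₀, by simp only [hΦdef, hFc₀, zero_smul]⟩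
  have htend := MeasureTheory.tendsto_integral_approxOn_of_measurable hΦint hΦmeas
      (Filter.Eventually.of_forall fun c => subset_closure (Set.mem_range_self c)) h0mem
      (MeasureTheory.integrable_zero _ _ _)
  have hKε : 0 < ε/2 * K := by positivity
  obtain ⟨n, hn⟩ : ∃ n : ℕ,
      dist ((MeasureTheory.SimpleFunc.approxOn Φ hΦmeas (Set.range Φ) 0 h0mem n).integral
        volume) IF < ε/2 * K := by
    have := (Metric.tendsto_atTop.1 htend (ε/2*K) hKε)
    obtain ⟨n, hn⟩ := this
    exact ⟨n, hn n le_rfl⟩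
  set S := MeasureTheory.SimpleFunc.approxOn Φ hΦmeas (Set.range Φ) 0 h0mem n with hSdef
  have hSnorm : ‖S.integral volume - IF‖ ≤ ε/2 * K := by
    rw [← dist_eq_norm]; exact hn.le
  -- representation of the simple function integral
  have hrep : ∀ y ∈ S.range, ∃ c : ℂ, Φ c = y := by
    intro y hy
    obtain ⟨x, hx⟩ := MeasureTheory.SimpleFunc.mem_range.1 hy
    rw [← hx]
    exact MeasureTheory.SimpleFunc.approxOn_mem hΦmeas h0mem n x
  choose! cmap hcmap using hrep
  set T := S.range with hTdef
  set N := T.card with hNdef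
  set e : Fin N ≃ {y // y ∈ T} := T.equivFin.symm with hedef
  refine ⟨N,
    fun i => (((volume (⇑S ⁻¹' {(e i : ℂ →ᵇ ℂ)})).toReal / K : ℝ) : ℂ) * F (cmap (e i)),
    fun i => cmap (e i),
    fun i => ⟨fun r => ((max 0 (δ - |r|) : ℝ) : ℂ),
      Complex.continuous_ofReal.comp (continuous_const.max (continuous_const.sub (continuous_abs)))⟩,
    ?_, ?_⟩
  · intro i
    apply HasCompactSupport.intro (isCompact_Icc (a := -δ) (b := δ))
    intro r hr
    simp only [Set.mem_Icc, not_and_or, not_le] at hr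
    have : δ ≤ |r| := by
      rcases hr with h | h
      · rw [abs_of_neg (by linarith)]; linarith
      · rw [abs_of_pos (by linarith)]; linarith
    simp only [ContinuousMap.coe_mk, Complex.ofReal_eq_zero, max_eq_left_iff]
    linarith
  · intro z
    -- identify the sum with K⁻¹ • (S.integral volume) z
    have hgφ : ∀ c : ℂ, ((max 0 (δ - |‖z - c‖|) : ℝ) : ℂ)
        = ((φ (z - c) : ℝ) : ℂ) := by
      intro c
      rw [abs_of_nonneg (norm_nonneg _)]
    have hsum : ∑ i : Fin N,
        (((volume (⇑S ⁻¹' {(e i : ℂ →ᵇ ℂ)})).toReal / K : ℝ) : ℂ) * F (cmap (e i))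
          * ((max 0 (δ - |‖z - cmap (e i)‖|) : ℝ) : ℂ)
        = (K : ℂ)⁻¹ * (S.integral volume) z := by
      have hSint : S.integral volume = ∑ y ∈ T, (volume (⇑S ⁻¹' {y})).toReal • y :=
        MeasureTheory.SimpleFunc.integral_eq volume S
      have happ : (S.integral volume) z
          = ∑ y ∈ T, (volume (⇑S ⁻¹' {y})).toReal • (y z) := by
        rw [hSint]
        rw [show ((∑ y ∈ T, (volume (⇑S ⁻¹' {y})).toReal • y : ℂ →ᵇ ℂ) z)
            = (BoundedContinuousFunction.evalCLM ℂ z)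
              (∑ y ∈ T, (volume (⇑S ⁻¹' {y})).toReal • y) from rfl]
        rw [map_sum]
        rfl
      have hTsum : ∑ y ∈ T, (volume (⇑S ⁻¹' {y})).toReal • (y z)
          = ∑ i : Fin N, (volume (⇑S ⁻¹' {(e i : ℂ →ᵇ ℂ)})).toReal • ((e i : ℂ →ᵇ ℂ) z) := by
        rw [← Finset.sum_coe_sort T]
        exact (Equiv.sum_comp e fun y => (volume (⇑S ⁻¹' {(y : ℂ →ᵇ ℂ)})).toReal
          • ((y : ℂ →ᵇ ℂ) z)).symm
      rw [happ, hTsum, Finset.mul_sum]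
      apply Finset.sum_congr rfl
      intro i _
      have hyi : Φ (cmap (e i)) = (e i : ℂ →ᵇ ℂ) := hcmap _ (e i).2
      rw [hgφ]
      have h1 := congrArg (fun f : ℂ →ᵇ ℂ => f z) hyi
      rw [hΦapply] at h1
      rw [← h1]
      push_cast
      rw [Complex.real_smul]
      push_cast
      field_simp
    rw [show (fun i => (((volume (⇑S ⁻¹' {(e i : ℂ →ᵇ ℂ)})).toReal / K : ℝ) : ℂ) * F (cmap (e i)))
        = fun i => (((volume (⇑S ⁻¹' {(e i : ℂ →ᵇ ℂ)})).toReal / K : ℝ) : ℂ) * F (cmap (e i))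
        from rfl]
    calc ‖F z - ∑ i : Fin N,
          (((volume (⇑S ⁻¹' {(e i : ℂ →ᵇ ℂ)})).toReal / K : ℝ) : ℂ) * F (cmap (e i))
            * ((max 0 (δ - |‖z - cmap (e i)‖|) : ℝ) : ℂ)‖
        = ‖F z - (K : ℂ)⁻¹ * (S.integral volume) z‖ := by rw [hsum]
      _ = ‖(K : ℂ)⁻¹ * ((K : ℂ) * F z - (S.integral volume) z)‖ := by
          congr 1
          have hKne : (K : ℂ) ≠ 0 := by
            simp only [ne_eq, Complex.ofReal_eq_zero]
            exact hK.ne'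
          field_simp
      _ = K⁻¹ * ‖(K : ℂ) * F z - (S.integral volume) z‖ := by
          rw [norm_mul]
          congr 1
          rw [norm_inv, Complex.norm_real, Real.norm_eq_abs, abs_of_pos hK]
      _ ≤ K⁻¹ * (‖(K : ℂ) * F z - IF z‖ + ‖IF z - (S.integral volume) z‖) := by
          apply mul_le_mul_of_nonneg_left _ (inv_nonneg.2 hK.le)
          calc ‖(K : ℂ) * F z - (S.integral volume) z‖
              = ‖((K : ℂ) * F z - IF z) + (IF z - (S.integral volume) z)‖ := by ring_nf
            _ ≤ _ := norm_add_le _ _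
      _ ≤ K⁻¹ * (ε/2 * K + ε/2 * K) := by
          apply mul_le_mul_of_nonneg_left _ (inv_nonneg.2 hK.le)
          apply add_le_add (hmoll z)
          calc ‖IF z - (S.integral volume) z‖
              = ‖(IF - S.integral volume) z‖ := by rw [BoundedContinuousFunction.coe_sub]; rfl
            _ ≤ ‖IF - S.integral volume‖ :=
                BoundedContinuousFunction.norm_coe_le_norm _ _
            _ = ‖S.integral volume - IF‖ := by rw [norm_sub_rev]
            _ ≤ ε/2 * K := hSnorm
      _ = ε := by
          have hK' := hK.ne'
          rw [show ε/2*K + ε/2*K = ε*K by ring, mul_comm ε K, ← mul_assoc, inv_mul_cancel₀ hK', one_mul]
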